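/- Let f : ℝ^n → ℝ be the log-sum-exp function f(x) = log(Σ_{i=1}^n exp(x_i)). Then its convex (Fenchel) conjugate satisfies: for u ∈ ℝ^n with u_i ≥ 0 for all i and Σ_i u_i = 1, sup_{x ∈ ℝ^n} (⟨u, x⟩ − f(x)) = Σ_i u_i·log(u_i) (with the convention 0·log 0 = 0); and for any other u ∈ ℝ^n (i.e., with some u_i < 0 or Σ_i u_i ≠ 1), sup_{x ∈ ℝ^n} (⟨u, x⟩ − f(x)) = +∞. -/

import Mathlib

open Finset Real Filter

private lemma gibbs_lse {n : ℕ} (hn : 0 < n) (u x : Fin n → ℝ) (hu : ∀ i, 0 ≤ u i)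
    (hs : ∑ i, u i = 1) :
    (∑ i, u i * x i) - Real.log (∑ i, Real.exp (x i)) ≤ ∑ i, u i * Real.log (u i) := by
  have hne : (Finset.univ : Finset (Fin n)).Nonempty := by
    simpa [Finset.univ_nonempty_iff] using Fin.pos_iff_nonempty.mp hn
  have hpos : 0 < ∑ i, Real.exp (x i) :=
    Finset.sum_pos (fun i _ => Real.exp_pos _) hne
  have key : Real.exp (∑ i, u i * (x i - Real.log (u i))) ≤ ∑ i, Real.exp (x i) := by
    have h1 := convexOn_exp.map_sum_le (t := Finset.univ) (w := u)
      (p := fun i => x i - Real.log (u i)) (fun i _ => hu i) hs (fun i _ => trivial)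
    simp only [smul_eq_mul] at h1
    refine h1.trans (Finset.sum_le_sum fun i _ => ?_)
    rcases eq_or_lt_of_le (hu i) with h | h
    · rw [← h, zero_mul]; positivity
    · rw [Real.exp_sub, Real.exp_log h, mul_div_assoc', mul_comm, mul_div_assoc,
        div_self h.ne', mul_one]
  have h2 : ∑ i, u i * (x i - Real.log (u i)) ≤ Real.log (∑ i, Real.exp (x i)) := by
    have := Real.log_le_log (Real.exp_pos _) key
    rwa [Real.log_exp] at this
  have h3 : ∑ i, u i * (x i - Real.log (u i))
      = (∑ i, u i * x i) - ∑ i, u i * Real.log (u i) := by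
    rw [← Finset.sum_sub_distrib]
    exact Finset.sum_congr rfl fun i _ => mul_sub _ _ _
  linarith [h2, h3.symm.le]

/-- The convex (Fenchel) conjugate of the log-sum-exp function
`f(x) = log(Σ_i exp(x_i))` on `ℝ^n` (suprema taken in the extended reals):
on the probability simplex it equals the negative Shannon entropy
`Σ_i u_i·log(u_i)` (with `0·log 0 = 0`, which holds automatically since
`Real.log 0 = 0` in Lean), and everywhere else it is `+∞`. -/
theorem stmt_10 {n : ℕ} (hn : 0 < n) :
    (∀ u : Fin n → ℝ, (∀ i, 0 ≤ u i) → (∑ i, u i) = 1 →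
      (⨆ x : Fin n → ℝ,
          (((∑ i, u i * x i) - Real.log (∑ i, Real.exp (x i)) : ℝ) : EReal)) =
        ((∑ i, u i * Real.log (u i) : ℝ) : EReal)) ∧
    (∀ u : Fin n → ℝ, ¬ ((∀ i, 0 ≤ u i) ∧ (∑ i, u i) = 1) →
      (⨆ x : Fin n → ℝ,
          (((∑ i, u i * x i) - Real.log (∑ i, Real.exp (x i)) : ℝ) : EReal)) =
        (⊤ : EReal)) := by
  have hne : (Finset.univ : Finset (Fin n)).Nonempty := by
    simpa [Finset.univ_nonempty_iff] using Fin.pos_iff_nonempty.mp hn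
  constructor
  · intro u hu hs
    set t : ℝ := ∑ i, u i * Real.log (u i) with ht
    apply le_antisymm
    · exact iSup_le fun x => EReal.coe_le_coe_iff.2 (gibbs_lse hn u x hu hs)
    · rw [le_iSup_iff]
      intro b hb
      -- sequence of approximants
      set X : ℕ → Fin n → ℝ := fun M i => if u i = 0 then -(M : ℝ) else Real.log (u i) with hX
      have hsum1 : ∀ M, (∑ i, u i * X M i) = t := by
        intro M
        refine Finset.sum_congr rfl fun i _ => ?_
        by_cases h : u i = 0
        · simp [hX, h]
        · simp [hX, h]
      have hexp : ∀ M i, Real.exp (X M i) = if u i = 0 then Real.exp (-(M : ℝ)) else u i := by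
        intro M i
        by_cases h : u i = 0
        · simp [hX, h]
        · simp [hX, h, Real.exp_log (lt_of_le_of_ne (hu i) (Ne.symm h))]
      have hS : Tendsto (fun M : ℕ => ∑ i, Real.exp (X M i)) atTop (nhds 1) := by
        have : Tendsto (fun M : ℕ => ∑ i, Real.exp (X M i)) atTop
            (nhds (∑ i : Fin n, (if u i = 0 then 0 else u i))) := by
          apply tendsto_finset_sum
          intro i _
          by_cases h : u i = 0
          · simp only [hexp, h, if_true]
            exact Real.tendsto_exp_neg_atTop_nhds_zero.comp tendsto_natCast_atTop_atTop
          · simp only [hexp, h, if_false]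
            exact tendsto_const_nhds
        have heq : (∑ i : Fin n, (if u i = 0 then 0 else u i)) = 1 := by
          rw [← hs]
          refine Finset.sum_congr rfl fun i _ => ?_
          by_cases h : u i = 0 <;> simp [h]
        rwa [heq] at this
      have hval : Tendsto (fun M : ℕ =>
          (((∑ i, u i * X M i) - Real.log (∑ i, Real.exp (X M i)) : ℝ) : EReal))
          atTop (nhds (t : EReal)) := by
        rw [EReal.tendsto_coe]
        have hlog : Tendsto (fun M : ℕ => Real.log (∑ i, Real.exp (X M i))) atTop (nhds 0) := by
          have := (Real.continuousAt_log one_ne_zero).tendsto.comp hS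
          simpa [Function.comp_def] using this
        have : Tendsto (fun M : ℕ => (∑ i, u i * X M i) - Real.log (∑ i, Real.exp (X M i)))
            atTop (nhds (t - 0)) := by
          apply Tendsto.sub _ hlog
          simp only [hsum1]
          exact tendsto_const_nhds
        simpa using this
      exact le_of_tendsto hval (Eventually.of_forall fun M => hb (X M))
  · intro u hcond
    rw [iSup_eq_top]
    intro b hb
    obtain ⟨r, hbr, -⟩ := EReal.exists_between_coe_real hb
    have hlogn : (0:ℝ) < n := by exact_mod_cast hn
    by_cases hpos : ∀ i, 0 ≤ u i
    · -- then sum ≠ 1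
      have hs : (∑ i, u i) ≠ 1 := fun h => hcond ⟨hpos, h⟩
      set s := ∑ i, u i with hsdef
      set c : ℝ := (r + Real.log n + 1) / (s - 1) with hc
      refine ⟨fun _ => c, lt_trans hbr ?_⟩
      rw [EReal.coe_lt_coe_iff]
      have h1 : (∑ i, u i * c) = s * c := by rw [← Finset.sum_mul]
      have h2 : (∑ i : Fin n, Real.exp c) = n * Real.exp c := by
        rw [Finset.sum_const, Finset.card_univ, Fintype.card_fin, nsmul_eq_mul]
      have h3 : Real.log (∑ i : Fin n, Real.exp c) = Real.log n + c := by
        rw [h2, Real.log_mul (by positivity) (Real.exp_pos c).ne', Real.log_exp]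
      rw [h1, h3]
      have hc1 : c * (s - 1) = r + Real.log n + 1 := by
        rw [hc, div_mul_cancel₀]
        exact sub_ne_zero.2 hs
      nlinarith [hc1]
    · push_neg at hpos
      obtain ⟨j, hj⟩ := hpos
      set c : ℝ := min 0 ((r + Real.log n + 1) / (u j)) with hc
      refine ⟨fun i => if i = j then c else 0, lt_trans hbr ?_⟩
      rw [EReal.coe_lt_coe_iff]
      have hc0 : c ≤ 0 := min_le_left _ _
      have h1 : (∑ i, u i * (if i = j then c else 0)) = u j * c := by
        rw [Finset.sum_eq_single j]
        · simp
        · intro i _ hij; simp [hij]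
        · intro h; exact absurd (Finset.mem_univ j) h
      have h2 : (∑ i : Fin n, Real.exp (if i = j then c else 0)) ≤ n := by
        calc (∑ i : Fin n, Real.exp (if i = j then c else 0))
            ≤ ∑ i : Fin n, 1 := by
              refine Finset.sum_le_sum fun i _ => ?_
              by_cases h : i = j
              · simpa [h] using Real.exp_le_one_iff.2 hc0
              · simp [h]
          _ = n := by simp
      have hSpos : 0 < ∑ i : Fin n, Real.exp (if i = j then c else 0) :=
        Finset.sum_pos (fun i _ => Real.exp_pos _) hne
      have h3 : Real.log (∑ i : Fin n, Real.exp (if i = j then c else 0)) ≤ Real.log n :=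
        Real.log_le_log hSpos h2
      have hcm : u j * c ≥ r + Real.log n + 1 := by
        have hle : c ≤ (r + Real.log n + 1) / (u j) := min_le_right _ _
        calc u j * c ≥ u j * ((r + Real.log n + 1) / (u j)) := by
              exact mul_le_mul_of_nonpos_left hle hj.le
          _ = r + Real.log n + 1 := mul_div_cancel₀ _ hj.ne
      rw [h1]
      linarith
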